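/- If a tuple Φ ∈ ℤ^n is C*_{Z,3}-realizable, then the one-tuple state ((λ1,...,λn)) = Φ can be obtained from the state ((0),(0),...,(0)) by a finite sequence of valid moves of types 1, 2 and 3 in which all type 2 moves are performed at the beginning of the sequence (i.e., every type 2 move precedes every move of type 1 or 3). -/

import Mathlib

namespace CPaper


/-- The six types of moves on states (all indices 0-based). -/
inductive Move where
  | t1 (d : ℕ)
  | t2 (i : ℕ)
  | t3 (i j : ℕ)
  | t4 (i j : ℕ)
  | t5 (i j : ℕ)
  | t6 (i j : ℕ)

/-- A state is a list of tuples of integers. -/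
abbrev State := List (List ℤ)

/-- A genuine state: at least one tuple, and all tuples nonempty. -/
def IsState (Φ : State) : Prop := Φ ≠ [] ∧ ∀ t ∈ Φ, t ≠ []

/-- The entries of a state, read in order (flattened). -/
def entries (Φ : State) : List ℤ := Φ.flatten

/-- The number of positions of a state. -/
def numPos (Φ : State) : ℕ := (entries Φ).length

/-- The value at the (0-based) position `i` of the state `Φ`. -/
def entry (Φ : State) (i : ℕ) : ℤ := (entries Φ).getD i 0

/-- The (0-based) index of the tuple containing the flat position `i`. -/
def tupleIdx : State → ℕ → ℕ
  | [], _ => 0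
  | t :: ts, i => if i < t.length then 0 else tupleIdx ts (i - t.length) + 1

/-- Positions `i` and `j` lie in the same tuple of `Φ`. -/
def SameTuple (Φ : State) (i j : ℕ) : Prop := tupleIdx Φ i = tupleIdx Φ j

/-- Position `i` is dominant in `Φ`: its value bounds the absolute value of
every entry of the tuple containing it. -/
def DominantAt (Φ : State) (i : ℕ) : Prop :=
  ∀ k, k < numPos Φ → SameTuple Φ i k → |entry Φ k| ≤ entry Φ i

/-- Apply `f` at flat position `i`, preserving the tuple structure. -/
def modifyFlat (f : ℤ → ℤ) : ℕ → State → State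
  | _, [] => []
  | i, t :: ts =>
    if i < t.length then (t.take i ++ f (t.getD i 0) :: t.drop (i + 1)) :: ts
    else t :: modifyFlat f (i - t.length) ts

/-- Concatenate the `d`-th and `(d+1)`-th tuples of `Φ` (0-based). -/
def joinAt (Φ : State) (d : ℕ) : State :=
  Φ.take d ++ (Φ.getD d [] ++ Φ.getD (d + 1) []) :: Φ.drop (d + 2)

/-- The action of a move on a state. -/
def Move.apply : Move → State → State
  | .t1 d, Φ => joinAt Φ d
  | .t2 i, Φ => modifyFlat (· + 1) i Φ
  | .t3 i j, Φ => modifyFlat (· - 1) j (modifyFlat (· + 1) i Φ)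
  | .t4 i j, Φ => modifyFlat (· - 1) j (modifyFlat (· + 1) i Φ)
  | .t5 i j, Φ => modifyFlat (· + 1) j (modifyFlat (· + 1) i Φ)
  | .t6 i j, Φ => modifyFlat (· + 1) j (modifyFlat (· + 1) i Φ)

/-- A move is admissible for `Φ` when its indices are within bounds. -/
def Move.Admissible : Move → State → Prop
  | .t1 d, Φ => d + 1 < Φ.length
  | .t2 i, Φ => i < numPos Φ
  | .t3 i j, Φ => i < numPos Φ ∧ j < numPos Φ ∧ i ≠ j
  | .t4 i j, Φ => i < numPos Φ ∧ j < numPos Φ ∧ i ≠ j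
  | .t5 i j, Φ => i < numPos Φ ∧ j < numPos Φ ∧ i ≠ j
  | .t6 i j, Φ => i < numPos Φ ∧ j < numPos Φ ∧ i ≠ j

/-- Validity of a move for a state. -/
def Move.Valid : Move → State → Prop
  | .t1 d, Φ => d + 1 < Φ.length
  | .t2 i, Φ => i < numPos Φ ∧ DominantAt Φ i
  | .t3 i j, Φ =>
      i < numPos Φ ∧ j < numPos Φ ∧ i ≠ j ∧ SameTuple Φ i j ∧ DominantAt Φ i ∧ entry Φ j ≤ 0
  | .t4 i j, Φ =>
      i < numPos Φ ∧ j < numPos Φ ∧ i ≠ j ∧ SameTuple Φ i j ∧ DominantAt Φ i ∧ 0 < entry Φ j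
  | .t5 i j, Φ =>
      i < numPos Φ ∧ j < numPos Φ ∧ i ≠ j ∧ SameTuple Φ i j ∧ DominantAt Φ i ∧ entry Φ j < 0
  | .t6 i j, Φ =>
      i < numPos Φ ∧ j < numPos Φ ∧ i ≠ j ∧ SameTuple Φ i j ∧ DominantAt Φ i ∧ 0 ≤ entry Φ j

def Move.isType1 : Move → Prop
  | .t1 _ => True
  | _ => False

def Move.isType2 : Move → Prop
  | .t2 _ => True
  | _ => False

def Move.isType3 : Move → Prop
  | .t3 _ _ => True
  | _ => False

/-- The move is of one of the types 1, 2 or 3. -/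
def Move.isType123 : Move → Prop
  | .t1 _ => True
  | .t2 _ => True
  | .t3 _ _ => True
  | _ => False

/-- `ValidSeq ms Φ Ψ`: the list of moves `ms`, applied in order starting from `Φ`,
consists of valid moves and ends at `Ψ`. -/
def ValidSeq : List Move → State → State → Prop
  | [], Φ, Ψ => Φ = Ψ
  | m :: ms, Φ, Ψ => m.Valid Φ ∧ ValidSeq ms (m.apply Φ) Ψ

/-- A tuple of integers is C*_{Z,6}-realizable: the one-tuple state `[l]` is reachable
from `((0),...,(0))` by a finite sequence of valid moves of types 1–6. -/
def CStarZ6 (l : List ℤ) : Prop :=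
  ∃ ms : List Move, ValidSeq ms (List.replicate l.length ([0] : List ℤ)) [l]

/-- A tuple of integers is C*_{Z,3}-realizable: the one-tuple state `[l]` is reachable
from `((0),...,(0))` by a finite sequence of valid moves of types 1, 2 and 3. -/
def CStarZ3 (l : List ℤ) : Prop :=
  ∃ ms : List Move, (∀ m ∈ ms, m.isType123) ∧
    ValidSeq ms (List.replicate l.length ([0] : List ℤ)) [l]



/-! ### Auxiliary lemmas -/

lemma entries_cons (t : List ℤ) (ts : State) : entries (t :: ts) = t ++ entries ts := by
  simp [entries]

lemma numPos_cons (t : List ℤ) (ts : State) : numPos (t :: ts) = t.length + numPos ts := by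
  simp [numPos, entries_cons]

lemma length_entries (Φ : State) : (entries Φ).length = numPos Φ := rfl

lemma mapLen_modifyFlat (f : ℤ → ℤ) (i : ℕ) (Φ : State) :
    (modifyFlat f i Φ).map List.length = Φ.map List.length := by
  induction Φ generalizing i with
  | nil => rfl
  | cons t ts ih =>
    rw [modifyFlat]
    split
    · rename_i h
      simp only [List.map_cons, List.length_append, List.length_take, List.length_cons,
        List.length_drop, List.cons.injEq]
      refine ⟨by omega, ?_⟩
      simp
    · simp [ih]

lemma length_modifyFlat (f : ℤ → ℤ) (i : ℕ) (Φ : State) :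
    (modifyFlat f i Φ).length = Φ.length := by
  have := congrArg List.length (mapLen_modifyFlat f i Φ)
  simpa using this

lemma getD_set (l : List ℤ) (i k : ℕ) (a : ℤ) :
    (l.set i a).getD k 0 = if i = k ∧ i < l.length then a else l.getD k 0 := by
  rw [List.getD_eq_getElem?_getD, List.getElem?_set, List.getD_eq_getElem?_getD]
  by_cases h1 : i = k
  · subst h1
    by_cases h2 : i < l.length
    · simp [h2]
    · simp [h2, List.getElem?_eq_none (by omega : l.length ≤ i)]
  · simp [h1]

lemma entries_modifyFlat (f : ℤ → ℤ) (i : ℕ) (Φ : State) :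
    entries (modifyFlat f i Φ) =
      if i < numPos Φ then (entries Φ).set i (f (entry Φ i)) else entries Φ := by
  induction Φ generalizing i with
  | nil => simp [modifyFlat, entries, numPos]
  | cons t ts ih =>
    rw [modifyFlat]
    split
    · rename_i h
      simp only [entries_cons]
      rw [if_pos (by rw [numPos_cons]; omega), List.set_append, if_pos h]
      congr 1
      have he : entry (t :: ts) i = t.getD i 0 := by
        rw [entry, entries_cons, List.getD_append _ _ _ i h]
      rw [he, List.set_eq_take_append_cons_drop, if_pos h]
    · rename_i h
      push_neg at h
      simp only [entries_cons]
      rw [ih]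
      by_cases h2 : i - t.length < numPos ts
      · rw [if_pos h2, if_pos (by rw [numPos_cons]; omega), List.set_append,
          if_neg (by omega)]
        have he : entry (t :: ts) i = entry ts (i - t.length) := by
          rw [entry, entry, entries_cons, List.getD_append_right _ _ _ _ (by omega)]
        rw [he]
      · rw [if_neg h2, if_neg (by rw [numPos_cons]; omega)]

lemma numPos_modifyFlat (f : ℤ → ℤ) (i : ℕ) (Φ : State) :
    numPos (modifyFlat f i Φ) = numPos Φ := by
  rw [numPos, entries_modifyFlat]
  split <;> simp [List.length_set, numPos]

lemma entry_modifyFlat (f : ℤ → ℤ) (j : ℕ) (Φ : State) (k : ℕ) :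
    entry (modifyFlat f j Φ) k = if j = k ∧ j < numPos Φ then f (entry Φ k) else entry Φ k := by
  rw [entry, entries_modifyFlat]
  by_cases h1 : j < numPos Φ
  · rw [if_pos h1, getD_set, length_entries]
    by_cases h2 : j = k
    · subst h2; simp [h1, entry]
    · simp [h2, entry]
  · rw [if_neg h1, if_neg (by tauto)]; rfl

lemma tupleIdx_congr (Φ Ψ : State) (h : Φ.map List.length = Ψ.map List.length) (i : ℕ) :
    tupleIdx Φ i = tupleIdx Ψ i := by
  induction Φ generalizing Ψ i with
  | nil => cases Ψ with
    | nil => rfl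
    | cons u us => simp at h
  | cons t ts ih =>
    cases Ψ with
    | nil => simp at h
    | cons u us =>
      simp only [List.map_cons, List.cons.injEq] at h
      rw [tupleIdx, tupleIdx, h.1, ih us h.2]

lemma tupleIdx_modifyFlat (f : ℤ → ℤ) (j : ℕ) (Φ : State) (i : ℕ) :
    tupleIdx (modifyFlat f j Φ) i = tupleIdx Φ i :=
  tupleIdx_congr _ _ (mapLen_modifyFlat f j Φ) i

lemma sameTuple_modifyFlat (f : ℤ → ℤ) (j : ℕ) (Φ : State) (i k : ℕ) :
    SameTuple (modifyFlat f j Φ) i k ↔ SameTuple Φ i k := by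
  unfold SameTuple
  rw [tupleIdx_modifyFlat, tupleIdx_modifyFlat]

lemma state_ext (Φ Ψ : State) (h1 : Φ.map List.length = Ψ.map List.length)
    (h2 : Φ.flatten = Ψ.flatten) : Φ = Ψ := by
  induction Φ generalizing Ψ with
  | nil => cases Ψ with
    | nil => rfl
    | cons u us => simp at h1
  | cons t ts ih =>
    cases Ψ with
    | nil => simp at h1
    | cons u us =>
      simp only [List.map_cons, List.cons.injEq] at h1
      simp only [List.flatten_cons] at h2
      obtain ⟨e1, e2⟩ := List.append_inj h2 h1.1
      rw [e1, ih us h1.2 e2]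

lemma modifyFlat_comm (f g : ℤ → ℤ) (i j : ℕ) (hij : i ≠ j) (Φ : State) :
    modifyFlat f i (modifyFlat g j Φ) = modifyFlat g j (modifyFlat f i Φ) := by
  apply state_ext
  · simp [mapLen_modifyFlat]
  · show entries _ = entries _
    have e1 : entry (modifyFlat g j Φ) i = entry Φ i := by
      rw [entry_modifyFlat, if_neg (fun hc => hij hc.1.symm)]
    have e2 : entry (modifyFlat f i Φ) j = entry Φ j := by
      rw [entry_modifyFlat, if_neg (fun hc => hij hc.1)]
    rw [entries_modifyFlat, entries_modifyFlat, entries_modifyFlat, entries_modifyFlat,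
      numPos_modifyFlat, numPos_modifyFlat, e1, e2]
    split_ifs <;> first
      | rfl
      | exact List.set_comm _ _ (Ne.symm hij)

lemma joinAt_nil (d : ℕ) : joinAt [] d = [[]] := by
  simp [joinAt]

lemma joinAt_cons_succ (t : List ℤ) (ts : State) (d : ℕ) :
    joinAt (t :: ts) (d + 1) = t :: joinAt ts d := by
  unfold joinAt
  rw [List.take_succ_cons, List.getD_cons_succ, List.getD_cons_succ,
    show List.drop (d + 1 + 2) (t :: ts) = List.drop (d + 2) ts from rfl]
  rfl

lemma joinAt_cons_zero (t : List ℤ) (ts : State) :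
    joinAt (t :: ts) 0 = (t ++ ts.getD 0 []) :: ts.drop 1 := by
  rfl

lemma entries_joinAt (Φ : State) (d : ℕ) : entries (joinAt Φ d) = entries Φ := by
  induction d generalizing Φ with
  | zero =>
    cases Φ with
    | nil => simp [joinAt_nil, entries]
    | cons t ts =>
      rw [joinAt_cons_zero]
      cases ts with
      | nil => simp [entries]
      | cons u us => simp [entries_cons]
  | succ d ih =>
    cases Φ with
    | nil => simp [joinAt_nil, entries]
    | cons t ts => rw [joinAt_cons_succ, entries_cons, entries_cons, ih]

lemma numPos_joinAt (Φ : State) (d : ℕ) : numPos (joinAt Φ d) = numPos Φ := by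
  rw [numPos, entries_joinAt]; rfl

lemma entry_joinAt (Φ : State) (d k : ℕ) : entry (joinAt Φ d) k = entry Φ k := by
  rw [entry, entries_joinAt]; rfl

lemma tupleIdx_joinAt (Φ : State) (d i : ℕ) (h : i < numPos Φ) :
    tupleIdx (joinAt Φ d) i = if tupleIdx Φ i ≤ d then tupleIdx Φ i else tupleIdx Φ i - 1 := by
  induction d generalizing Φ i with
  | zero =>
    cases Φ with
    | nil => simp [numPos, entries] at h
    | cons t ts =>
      rw [joinAt_cons_zero]
      cases ts with
      | nil =>
        have h' : i < t.length := by
          rw [numPos_cons] at h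
          simpa [numPos, entries] using h
        simp [tupleIdx, h']
      | cons u us =>
        simp only [List.getD_cons_zero, List.drop_one, List.tail_cons]
        simp only [tupleIdx, List.length_append]
        have e : i - (t.length + u.length) = i - t.length - u.length := by omega
        rw [e]
        split_ifs <;> omega
  | succ d ih =>
    cases Φ with
    | nil => simp [numPos, entries] at h
    | cons t ts =>
      rw [joinAt_cons_succ]
      simp only [tupleIdx]
      by_cases h1 : i < t.length
      · simp [h1]
      · rw [numPos_cons] at h
        simp only [if_neg h1]
        rw [ih ts (i - t.length) (by omega)]
        generalize tupleIdx ts (i - t.length) = w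
        split_ifs <;> omega

lemma sameTuple_joinAt (Φ : State) (d : ℕ) {i k : ℕ} (hi : i < numPos Φ) (hk : k < numPos Φ)
    (h : SameTuple Φ i k) : SameTuple (joinAt Φ d) i k := by
  unfold SameTuple at *
  rw [tupleIdx_joinAt _ _ _ hi, tupleIdx_joinAt _ _ _ hk, h]

lemma mapLen_joinAt_congr (Φ Ψ : State) (d : ℕ) (h : Φ.map List.length = Ψ.map List.length) :
    (joinAt Φ d).map List.length = (joinAt Ψ d).map List.length := by
  induction d generalizing Φ Ψ with
  | zero =>
    cases Φ with
    | nil => cases Ψ with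
      | nil => rfl
      | cons u us => simp at h
    | cons t ts =>
      cases Ψ with
      | nil => simp at h
      | cons u us =>
        simp only [List.map_cons, List.cons.injEq] at h
        rw [joinAt_cons_zero, joinAt_cons_zero]
        cases ts with
        | nil => cases us with
          | nil => simp [h.1]
          | cons v vs => simp at h
        | cons a as =>
          cases us with
          | nil => simp at h
          | cons b bs =>
            simp only [List.map_cons, List.cons.injEq] at h
            simp [h.1, h.2.1, h.2.2]
  | succ d ih =>
    cases Φ with
    | nil => cases Ψ with
      | nil => rfl
      | cons u us => simp at h
    | cons t ts =>
      cases Ψ with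
      | nil => simp at h
      | cons u us =>
        simp only [List.map_cons, List.cons.injEq] at h
        rw [joinAt_cons_succ, joinAt_cons_succ]
        simp only [List.map_cons, List.cons.injEq]
        exact ⟨h.1, ih ts us h.2⟩

lemma modifyFlat_joinAt (f : ℤ → ℤ) (i d : ℕ) (Φ : State) :
    modifyFlat f i (joinAt Φ d) = joinAt (modifyFlat f i Φ) d := by
  apply state_ext
  · rw [mapLen_modifyFlat]
    exact mapLen_joinAt_congr _ _ d (mapLen_modifyFlat f i Φ).symm
  · show entries _ = entries _
    rw [entries_modifyFlat, entries_joinAt, entries_joinAt, entries_modifyFlat,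
      numPos_joinAt, entry_joinAt]

lemma numPos_apply_t2 (i : ℕ) (Φ : State) :
    numPos ((Move.t2 i).apply Φ) = numPos Φ :=
  numPos_modifyFlat _ _ _

/-- The key single-step commutation: a valid type-2 move performed after a valid
type-1 or type-3 move can be replaced by a type-2 move followed by a type-1/3 move. -/
lemma swap_single (m : Move) (hm : m.isType1 ∨ m.isType3) (i : ℕ) (Φ : State)
    (h1 : m.Valid Φ) (h2 : (Move.t2 i).Valid (m.apply Φ)) :
    ∃ (i' : ℕ) (m' : Move), (m'.isType1 ∨ m'.isType3) ∧ (Move.t2 i').Valid Φ ∧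
      m'.Valid ((Move.t2 i').apply Φ) ∧
      m'.apply ((Move.t2 i').apply Φ) = (Move.t2 i).apply (m.apply Φ) := by
  cases m with
  | t2 j => rcases hm with h | h <;> exact (h : False).elim
  | t4 a b => rcases hm with h | h <;> exact (h : False).elim
  | t5 a b => rcases hm with h | h <;> exact (h : False).elim
  | t6 a b => rcases hm with h | h <;> exact (h : False).elim
  | t1 d =>
    obtain ⟨hi, hdomi⟩ := h2
    rw [show (Move.t1 d).apply Φ = joinAt Φ d from rfl] at hi hdomi
    rw [numPos_joinAt] at hi
    refine ⟨i, Move.t1 d, Or.inl trivial, ⟨hi, ?_⟩, ?_, ?_⟩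
    · intro k hk hsk
      have := hdomi k (by rwa [numPos_joinAt]) (sameTuple_joinAt Φ d hi hk hsk)
      rwa [entry_joinAt, entry_joinAt] at this
    · show d + 1 < (modifyFlat _ i Φ).length
      rw [length_modifyFlat]
      exact h1
    · show joinAt (modifyFlat _ i Φ) d = modifyFlat _ i (joinAt Φ d)
      exact (modifyFlat_joinAt _ i d Φ).symm
  | t3 a b =>
    obtain ⟨ha, hb, hab, hst, hdom, hbneg⟩ := h1
    obtain ⟨hi, hdomi⟩ := h2
    set Ψ := (Move.t3 a b).apply Φ with hΨ
    have hΨdef : Ψ = modifyFlat (· - 1) b (modifyFlat (· + 1) a Φ) := rfl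
    have hnp : numPos Ψ = numPos Φ := by rw [hΨdef, numPos_modifyFlat, numPos_modifyFlat]
    rw [hnp] at hi
    have hEa : entry Ψ a = entry Φ a + 1 := by
      rw [hΨdef, entry_modifyFlat, if_neg (by simp [Ne.symm hab]), entry_modifyFlat,
        if_pos ⟨rfl, ha⟩]
    have hEb : entry Ψ b = entry Φ b - 1 := by
      rw [hΨdef, entry_modifyFlat, numPos_modifyFlat, if_pos ⟨rfl, hb⟩, entry_modifyFlat,
        if_neg (by simp [hab])]
    have hEk : ∀ k, k ≠ a → k ≠ b → entry Ψ k = entry Φ k := by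
      intro k hka hkb
      rw [hΨdef, entry_modifyFlat, if_neg (by simp [Ne.symm hkb]), entry_modifyFlat,
        if_neg (by simp [Ne.symm hka])]
    have hSame : ∀ k l, SameTuple Ψ k l ↔ SameTuple Φ k l := by
      intro k l
      rw [hΨdef, sameTuple_modifyFlat, sameTuple_modifyFlat]
    have hA0 : 0 ≤ entry Φ a := le_trans (abs_nonneg _) (hdom a ha rfl)
    have hib : i ≠ b := by
      intro h
      subst h
      have := hdomi i (by omega) rfl
      rw [hEb] at this
      have h2 := abs_nonneg (entry Φ i - 1)
      have h3 : entry Φ i ≤ 0 := hbneg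
      omega
    by_cases hia : i = a
    · subst hia
      refine ⟨i, Move.t3 i b, Or.inr trivial, ⟨ha, hdom⟩, ?_, ?_⟩
      · refine ⟨by rwa [numPos_apply_t2], by rwa [numPos_apply_t2], hab, ?_, ?_, ?_⟩
        · rwa [show (Move.t2 i).apply Φ = modifyFlat (· + 1) i Φ from rfl,
            sameTuple_modifyFlat]
        · intro k hk hsk
          rw [numPos_apply_t2] at hk
          rw [show (Move.t2 i).apply Φ = modifyFlat (· + 1) i Φ from rfl] at hsk ⊢
          rw [sameTuple_modifyFlat] at hsk
          by_cases hki : i = k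
          · subst hki
            rw [entry_modifyFlat, if_pos ⟨rfl, ha⟩, abs_of_nonneg (by omega)]
          · rw [entry_modifyFlat, if_neg (fun hc => hki hc.1),
              entry_modifyFlat, if_pos ⟨rfl, ha⟩]
            have := hdom k hk hsk
            omega
        · rw [show (Move.t2 i).apply Φ = modifyFlat (· + 1) i Φ from rfl,
            entry_modifyFlat, if_neg (fun hc => hab hc.1)]
          exact hbneg
      · show modifyFlat (· - 1) b (modifyFlat (· + 1) i (modifyFlat (· + 1) i Φ)) =
          modifyFlat (· + 1) i (modifyFlat (· - 1) b (modifyFlat (· + 1) i Φ))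
        exact (modifyFlat_comm _ _ i b hib _).symm
    · -- i ≠ a, i ≠ b
      have hEi : entry Ψ i = entry Φ i := hEk i hia hib
      by_cases hsia : SameTuple Φ i a
      · -- same tuple as a: use T2^a then T3^{i b}
        have hkey : entry Φ a + 1 ≤ entry Φ i := by
          have := hdomi a (by omega) (by rw [hSame]; exact hsia)
          rw [hEa, hEi, abs_of_nonneg (by omega)] at this
          exact this
        have hdomFi : ∀ k, k < numPos Φ → SameTuple Φ a k → |entry Φ k| ≤ entry Φ i := by
          intro k hk hsk
          calc |entry Φ k| ≤ entry Φ a := hdom k hk hsk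
            _ ≤ entry Φ i := by omega
        refine ⟨a, Move.t3 i b, Or.inr trivial, ⟨ha, hdom⟩, ?_, ?_⟩
        · refine ⟨by rwa [numPos_apply_t2], by rwa [numPos_apply_t2], hib, ?_, ?_, ?_⟩
          · rw [show (Move.t2 a).apply Φ = modifyFlat (· + 1) a Φ from rfl,
              sameTuple_modifyFlat]
            exact Eq.trans (hsia : tupleIdx Φ i = tupleIdx Φ a) hst
          · intro k hk hsk
            rw [numPos_apply_t2] at hk
            rw [show (Move.t2 a).apply Φ = modifyFlat (· + 1) a Φ from rfl] at hsk ⊢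
            rw [sameTuple_modifyFlat] at hsk
            have hsak : SameTuple Φ a k :=
              Eq.trans ((hsia : tupleIdx Φ i = tupleIdx Φ a)).symm (hsk : _)
            by_cases hka : a = k
            · subst hka
              rw [entry_modifyFlat, if_pos ⟨rfl, ha⟩,
                entry_modifyFlat, if_neg (fun hc => hia hc.1.symm),
                abs_of_nonneg (by omega)]
              exact hkey
            · rw [entry_modifyFlat, if_neg (fun hc => hka hc.1),
                entry_modifyFlat, if_neg (fun hc => hia hc.1.symm)]
              exact hdomFi k hk hsak
          · rw [show (Move.t2 a).apply Φ = modifyFlat (· + 1) a Φ from rfl,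
              entry_modifyFlat, if_neg (fun hc => hab hc.1)]
            exact hbneg
        · show modifyFlat (· - 1) b (modifyFlat (· + 1) i (modifyFlat (· + 1) a Φ)) =
            modifyFlat (· + 1) i (modifyFlat (· - 1) b (modifyFlat (· + 1) a Φ))
          exact (modifyFlat_comm _ _ i b hib _).symm
      · -- different tuple from a: plain swap
        have hsib : ¬ SameTuple Φ i b := by
          intro h
          exact hsia (Eq.trans (h : tupleIdx Φ i = tupleIdx Φ b)
            ((hst : tupleIdx Φ a = tupleIdx Φ b)).symm)
        refine ⟨i, Move.t3 a b, Or.inr trivial, ⟨hi, ?_⟩, ?_, ?_⟩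
        · intro k hk hsk
          have hka : k ≠ a := fun h => hsia (h ▸ hsk)
          have hkb : k ≠ b := fun h => hsib (h ▸ hsk)
          have := hdomi k (by omega) (by rw [hSame]; exact hsk)
          rwa [hEi, hEk k hka hkb] at this
        · refine ⟨by rwa [numPos_apply_t2], by rwa [numPos_apply_t2], hab, ?_, ?_, ?_⟩
          · rw [show (Move.t2 i).apply Φ = modifyFlat (· + 1) i Φ from rfl,
              sameTuple_modifyFlat]
            exact hst
          · intro k hk hsk
            rw [numPos_apply_t2] at hk
            rw [show (Move.t2 i).apply Φ = modifyFlat (· + 1) i Φ from rfl] at hsk ⊢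
            rw [sameTuple_modifyFlat] at hsk
            have hki : k ≠ i := by
              intro h
              subst h
              exact hsia ((hsk : tupleIdx Φ a = tupleIdx Φ k)).symm
            rw [entry_modifyFlat, if_neg (fun hc => hki (hc.1).symm),
              entry_modifyFlat, if_neg (fun hc => hia hc.1)]
            exact hdom k hk hsk
          · rw [show (Move.t2 i).apply Φ = modifyFlat (· + 1) i Φ from rfl,
              entry_modifyFlat, if_neg (fun hc => hib hc.1)]
            exact hbneg
        · show modifyFlat (· - 1) b (modifyFlat (· + 1) a (modifyFlat (· + 1) i Φ)) =
            modifyFlat (· + 1) i (modifyFlat (· - 1) b (modifyFlat (· + 1) a Φ))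
          rw [modifyFlat_comm (· + 1) (· - 1) i b hib, modifyFlat_comm (· + 1) (· + 1) i a hia]

lemma validSeq_append (a b : List Move) (Φ Ψ : State) :
    ValidSeq (a ++ b) Φ Ψ ↔ ∃ Θ, ValidSeq a Φ Θ ∧ ValidSeq b Θ Ψ := by
  induction a generalizing Φ with
  | nil =>
    simp only [List.nil_append]
    constructor
    · intro h; exact ⟨Φ, rfl, h⟩
    · rintro ⟨Θ, h1, h2⟩; rw [show Φ = Θ from h1]; exact h2
  | cons m a ih =>
    simp only [List.cons_append]
    show (m.Valid Φ ∧ ValidSeq (a ++ b) (m.apply Φ) Ψ) ↔ _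
    rw [ih]
    constructor
    · rintro ⟨h1, Θ, h2, h3⟩; exact ⟨Θ, ⟨h1, h2⟩, h3⟩
    · rintro ⟨Θ, ⟨h1, h2⟩, h3⟩; exact ⟨h1, Θ, h2, h3⟩

lemma swap_list (ms2 : List Move) (m : Move) (hm : m.isType1 ∨ m.isType3)
    (h2 : ∀ x ∈ ms2, x.isType2) (Φ Ψ : State) (hv : ValidSeq (m :: ms2) Φ Ψ) :
    ∃ (ms2' : List Move) (m' : Move), (∀ x ∈ ms2', x.isType2) ∧
      (m'.isType1 ∨ m'.isType3) ∧ ValidSeq (ms2' ++ [m']) Φ Ψ := by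
  induction ms2 generalizing m Φ with
  | nil => exact ⟨[], m, by simp, hm, hv⟩
  | cons x ms2 ih =>
    obtain ⟨hmv, hxv, hrest⟩ := hv
    cases x with
    | t2 i =>
      obtain ⟨i', m', hm', hv1, hv2, heq⟩ := swap_single m hm i Φ hmv hxv
      have hseq : ValidSeq (m' :: ms2) ((Move.t2 i').apply Φ) Ψ :=
        ⟨hv2, by rw [heq]; exact hrest⟩
      obtain ⟨ms2', m'', hA, hB, hC⟩ :=
        ih m' hm' (fun y hy => h2 y (List.mem_cons_of_mem _ hy)) _ hseq
      refine ⟨Move.t2 i' :: ms2', m'', ?_, hB, hv1, hC⟩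
      intro y hy
      rcases List.mem_cons.1 hy with h | h
      · subst h; trivial
      · exact hA y h
    | t1 d => exact ((h2 _ (List.mem_cons_self)) : False).elim
    | t3 a b => exact ((h2 _ (List.mem_cons_self)) : False).elim
    | t4 a b => exact ((h2 _ (List.mem_cons_self)) : False).elim
    | t5 a b => exact ((h2 _ (List.mem_cons_self)) : False).elim
    | t6 a b => exact ((h2 _ (List.mem_cons_self)) : False).elim

lemma main_aux (ms : List Move) (h123 : ∀ m ∈ ms, m.isType123) (Φ Ψ : State)
    (hv : ValidSeq ms Φ Ψ) :
    ∃ ms2 ms13 : List Move, (∀ m ∈ ms2, m.isType2) ∧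
      (∀ m ∈ ms13, m.isType1 ∨ m.isType3) ∧ ValidSeq (ms2 ++ ms13) Φ Ψ := by
  induction ms generalizing Φ with
  | nil => exact ⟨[], [], by simp, by simp, hv⟩
  | cons m ms ih =>
    obtain ⟨hmv, hrest⟩ := hv
    obtain ⟨ms2, ms13, hA, hB, hC⟩ :=
      ih (fun x hx => h123 x (List.mem_cons_of_mem _ hx)) _ hrest
    have hm := h123 m (List.mem_cons_self)
    have step : m.isType1 ∨ m.isType3 →
        ∃ ms2 ms13 : List Move, (∀ x ∈ ms2, x.isType2) ∧
          (∀ x ∈ ms13, x.isType1 ∨ x.isType3) ∧ ValidSeq (ms2 ++ ms13) Φ Ψ := by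
      intro hm13
      rw [validSeq_append] at hC
      obtain ⟨Θ, hC1, hC2⟩ := hC
      obtain ⟨ms2', m', hA', hm', hV⟩ := swap_list ms2 m hm13 hA Φ Θ ⟨hmv, hC1⟩
      refine ⟨ms2', m' :: ms13, hA', ?_, ?_⟩
      · intro y hy
        rcases List.mem_cons.1 hy with h | h
        · subst h; exact hm'
        · exact hB y h
      · rw [show ms2' ++ m' :: ms13 = (ms2' ++ [m']) ++ ms13 by simp]
        rw [validSeq_append]
        exact ⟨Θ, hV, hC2⟩
    cases m with
    | t1 d => exact step (Or.inl trivial)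
    | t3 a b => exact step (Or.inr trivial)
    | t2 i =>
      refine ⟨Move.t2 i :: ms2, ms13, ?_, hB, hmv, hC⟩
      intro y hy
      rcases List.mem_cons.1 hy with h | h
      · subst h; trivial
      · exact hA y h
    | t4 a b => exact (hm : False).elim
    | t5 a b => exact (hm : False).elim
    | t6 a b => exact (hm : False).elim

/-- If a tuple is C*_{Z,3}-realizable, it can be obtained by a sequence of valid
moves of types 1, 2 and 3 in which all type 2 moves come first. -/
theorem CStarZ3_with_T2_at_beginning (l : List ℤ) (h : CStarZ3 l) :
    ∃ ms2 ms13 : List Move,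
      (∀ m ∈ ms2, m.isType2) ∧
      (∀ m ∈ ms13, m.isType1 ∨ m.isType3) ∧
      ValidSeq (ms2 ++ ms13) (List.replicate l.length ([0] : List ℤ)) [l] := by
  obtain ⟨ms, h123, hv⟩ := h
  exact main_aux ms h123 _ _ hv

end CPaper
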